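/- Let the group-groupoid G act on a group M via a group homomorphism w : M → G₀. Then the action groupoid G ⋉ M — with objects M, morphisms {(a,x) : α(a) = w(x)}, source (a,x) ↦ x, target (a,x) ↦ a·x, and composition (b, a·x) ∘ (a, x) = (b ∘ a, x) — becomes a group-groupoid under the operation (a,x) + (b,y) = (a+b, x+y), and the projection p : G ⋉ M → G, (a,x) ↦ a, is a covering morphism of group-groupoids. -/

import Mathlib

/-- A groupoid, given algebraically: a set of objects `O` and a set of morphisms `M`
with source, target, identity-assigning, (totalized) composition and inversion maps.
`comp b a` is the composite `b ∘ a`, only constrained when `src b = tgt a`. -/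
structure Gpd (O M : Type) where
  src : M → O
  tgt : M → O
  idm : O → M
  comp : M → M → M
  inv : M → M
  src_idm : ∀ x, src (idm x) = x
  tgt_idm : ∀ x, tgt (idm x) = x
  src_comp : ∀ b a, src b = tgt a → src (comp b a) = src a
  tgt_comp : ∀ b a, src b = tgt a → tgt (comp b a) = tgt b
  comp_assoc : ∀ c b a, src c = tgt b → src b = tgt a →
    comp c (comp b a) = comp (comp c b) a
  comp_idm : ∀ a, comp a (idm (src a)) = a
  idm_comp : ∀ a, comp (idm (tgt a)) a = a
  src_inv : ∀ a, src (inv a) = tgt a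
  tgt_inv : ∀ a, tgt (inv a) = src a
  inv_comp : ∀ a, comp (inv a) a = idm (src a)
  comp_inv : ∀ a, comp a (inv a) = idm (tgt a)

/-- A group-groupoid (a group object in groupoids): the objects and morphisms are
groups (written additively, not necessarily commutative) and the structure maps
are group homomorphisms; the interchange law holds. -/
structure GroupGpd (O M : Type) [AddGroup O] [AddGroup M] extends Gpd O M where
  src_add : ∀ a b, src (a + b) = src a + src b
  tgt_add : ∀ a b, tgt (a + b) = tgt a + tgt b
  idm_add : ∀ x y, idm (x + y) = idm x + idm y
  interchange : ∀ a b c d, src b = tgt a → src d = tgt c →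
    comp b a + comp d c = comp (b + d) (a + c)

/-- A morphism of group-groupoids: a functor between the underlying groupoids that is
a group homomorphism on morphisms and on objects. -/
structure GGHom {O M O' M' : Type} [AddGroup O] [AddGroup M] [AddGroup O'] [AddGroup M']
    (S : GroupGpd O M) (T : GroupGpd O' M') where
  f : M → M'
  f0 : O → O'
  map_src : ∀ a, T.src (f a) = f0 (S.src a)
  map_tgt : ∀ a, T.tgt (f a) = f0 (S.tgt a)
  map_idm : ∀ x, f (S.idm x) = T.idm (f0 x)
  map_comp : ∀ b a, S.src b = S.tgt a → f (S.comp b a) = T.comp (f b) (f a)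
  map_add : ∀ a b, f (a + b) = f a + f b
  map_add0 : ∀ x y, f0 (x + y) = f0 x + f0 y

/-- `p : H → G` is a covering morphism if it restricts to a bijection on each star. -/
def GGHom.IsCovering {O M O' M' : Type} [AddGroup O] [AddGroup M] [AddGroup O'] [AddGroup M']
    {S : GroupGpd O M} {T : GroupGpd O' M'} (p : GGHom S T) : Prop :=
  ∀ x : O, Set.BijOn p.f {a | S.src a = x} {b | T.src b = p.f0 x}

/-- The morphism group of the action groupoid `G ⋉ M`: the subgroup
`{(a,x) : α(a) = w(x)}` of `G × M`. -/
def actionSub {O MG M : Type} [AddGroup O] [AddGroup MG] [AddGroup M]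
    (S : GroupGpd O MG) (w : M →+ O) : AddSubgroup (MG × M) where
  carrier := {q | S.src q.1 = w q.2}
  zero_mem' := by
    have h := S.src_add 0 0
    rw [add_zero] at h
    have h0 : S.src (0 : MG) = 0 := left_eq_add.mp h
    simp [h0]
  add_mem' := by
    intro a b ha hb
    simp only [Set.mem_setOf_eq] at *
    show S.src (a.1 + b.1) = w (a.2 + b.2)
    rw [S.src_add, ha, hb, map_add]
  neg_mem' := by
    intro a ha
    simp only [Set.mem_setOf_eq] at *
    have h : S.src (-a.1) + S.src a.1 = 0 := by
      rw [← S.src_add, neg_add_cancel]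
      have h2 := S.src_add 0 0
      rw [add_zero] at h2
      exact (left_eq_add.mp h2)
    have : S.src (-a.1) = -S.src a.1 := eq_neg_of_add_eq_zero_left h
    show S.src (-a.1) = w (-a.2)
    rw [this, ha, map_neg]

open Classical in
/-- Auxiliary: the action groupoid `G ⋉ M` as a group-groupoid. -/
noncomputable def actT {O MG M : Type} [AddGroup O] [AddGroup MG] [AddGroup M]
    (S : GroupGpd O MG) (w : M →+ O) (act : MG → M → M)
    (hw : ∀ (a : MG) (x : M), S.src a = w x → w (act a x) = S.tgt a)
    (hcomp : ∀ (a b : MG) (x : M), S.src a = w x → S.src b = w (act a x) →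
      act b (act a x) = act (S.comp b a) x)
    (hid : ∀ x : M, act (S.idm (w x)) x = x)
    (hinter : ∀ (a b : MG) (x y : M), S.src a = w x → S.src b = w y →
      act b y + act a x = act (b + a) (y + x)) :
    GroupGpd M ↥(actionSub S w) where
  src q := q.1.2
  tgt q := act q.1.1 q.1.2
  idm x := ⟨(S.idm (w x), x), (S.src_idm (w x) : _)⟩
  comp b a := if h : b.1.2 = act a.1.1 a.1.2 then
      ⟨(S.comp b.1.1 a.1.1, a.1.2), by
        have hb : S.src b.1.1 = w b.1.2 := b.2
        have ha : S.src a.1.1 = w a.1.2 := a.2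
        have hst : S.src b.1.1 = S.tgt a.1.1 := by
          rw [hb, h, hw a.1.1 a.1.2 ha]
        show S.src (S.comp b.1.1 a.1.1) = w a.1.2
        rw [S.src_comp _ _ hst, ha]⟩
    else a
  inv a := ⟨(S.inv a.1.1, act a.1.1 a.1.2), by
      show S.src (S.inv a.1.1) = w (act a.1.1 a.1.2)
      rw [S.src_inv, hw a.1.1 a.1.2 a.2]⟩
  src_idm x := rfl
  tgt_idm x := hid x
  src_comp b a h := by
    rw [dif_pos h]
  tgt_comp b a h := by
    have hb : S.src b.1.1 = w b.1.2 := b.2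
    have ha : S.src a.1.1 = w a.1.2 := a.2
    rw [dif_pos h]
    show act (S.comp b.1.1 a.1.1) a.1.2 = act b.1.1 b.1.2
    rw [h, hcomp a.1.1 b.1.1 a.1.2 ha (by rw [hb, h])]
  comp_assoc c b a hcb hba := by
    have ha : S.src a.1.1 = w a.1.2 := a.2
    have hb : S.src b.1.1 = w b.1.2 := b.2
    have hc : S.src c.1.1 = w c.1.2 := c.2
    have hba' : S.src b.1.1 = w (act a.1.1 a.1.2) := by rw [hb, hba]
    have hcb' : S.src c.1.1 = w (act b.1.1 b.1.2) := by rw [hc, hcb]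
    have hstba : S.src b.1.1 = S.tgt a.1.1 := by rw [hba', hw a.1.1 a.1.2 ha]
    have hstcb : S.src c.1.1 = S.tgt b.1.1 := by rw [hcb', hw b.1.1 b.1.2 hb]
    have h1 : c.1.2 = act (S.comp b.1.1 a.1.1) a.1.2 := by
      rw [← hcomp a.1.1 b.1.1 a.1.2 ha hba', ← hba]; exact hcb
    rw [dif_pos hba, dif_pos hcb]
    rw [dif_pos h1, dif_pos hba]
    exact Subtype.ext (Prod.ext (S.comp_assoc _ _ _ hstcb hstba) rfl)
  comp_idm a := by
    dsimp only
    have ha : S.src a.1.1 = w a.1.2 := a.2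
    have h : a.1.2 = act (S.idm (w a.1.2)) a.1.2 := (hid a.1.2).symm
    rw [dif_pos h]
    refine Subtype.ext (Prod.ext ?_ rfl)
    show S.comp a.1.1 (S.idm (w a.1.2)) = a.1.1
    rw [← ha]; exact S.comp_idm a.1.1
  idm_comp a := by
    dsimp only
    have ha : S.src a.1.1 = w a.1.2 := a.2
    rw [dif_pos rfl]
    refine Subtype.ext (Prod.ext ?_ rfl)
    show S.comp (S.idm (w (act a.1.1 a.1.2))) a.1.1 = a.1.1
    rw [hw a.1.1 a.1.2 ha]; exact S.idm_comp a.1.1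
  src_inv a := rfl
  tgt_inv a := by
    have ha : S.src a.1.1 = w a.1.2 := a.2
    have hinv : S.src (S.inv a.1.1) = w (act a.1.1 a.1.2) := by
      rw [S.src_inv, hw a.1.1 a.1.2 ha]
    show act (S.inv a.1.1) (act a.1.1 a.1.2) = a.1.2
    rw [hcomp a.1.1 (S.inv a.1.1) a.1.2 ha hinv, S.inv_comp, ha, hid]
  inv_comp a := by
    dsimp only
    have ha : S.src a.1.1 = w a.1.2 := a.2
    rw [dif_pos rfl]
    refine Subtype.ext (Prod.ext ?_ rfl)
    show S.comp (S.inv a.1.1) a.1.1 = S.idm (w a.1.2)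
    rw [S.inv_comp, ha]
  comp_inv a := by
    dsimp only
    have ha : S.src a.1.1 = w a.1.2 := a.2
    have hinv : S.src (S.inv a.1.1) = w (act a.1.1 a.1.2) := by
      rw [S.src_inv, hw a.1.1 a.1.2 ha]
    have h : a.1.2 = act (S.inv a.1.1) (act a.1.1 a.1.2) := by
      rw [hcomp a.1.1 (S.inv a.1.1) a.1.2 ha hinv, S.inv_comp, ha, hid]
    rw [dif_pos h]
    refine Subtype.ext (Prod.ext ?_ rfl)
    show S.comp a.1.1 (S.inv a.1.1) = S.idm (w (act a.1.1 a.1.2))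
    rw [S.comp_inv, hw a.1.1 a.1.2 ha]
  src_add a b := rfl
  tgt_add a b := by
    have ha : S.src a.1.1 = w a.1.2 := a.2
    have hb : S.src b.1.1 = w b.1.2 := b.2
    show act (a.1.1 + b.1.1) (a.1.2 + b.1.2) = act a.1.1 a.1.2 + act b.1.1 b.1.2
    exact (hinter b.1.1 a.1.1 b.1.2 a.1.2 hb ha).symm
  idm_add x y := by
    refine Subtype.ext (Prod.ext ?_ rfl)
    show S.idm (w (x + y)) = S.idm (w x) + S.idm (w y)
    rw [map_add, S.idm_add]
  interchange a b c d hba hdc := by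
    have ha : S.src a.1.1 = w a.1.2 := a.2
    have hb : S.src b.1.1 = w b.1.2 := b.2
    have hc : S.src c.1.1 = w c.1.2 := c.2
    have hd : S.src d.1.1 = w d.1.2 := d.2
    have hstba : S.src b.1.1 = S.tgt a.1.1 := by
      rw [hb, hba, hw a.1.1 a.1.2 ha]
    have hstdc : S.src d.1.1 = S.tgt c.1.1 := by
      rw [hd, hdc, hw c.1.1 c.1.2 hc]
    have h : (b + d).1.2 = act (a + c).1.1 (a + c).1.2 := by
      show b.1.2 + d.1.2 = act (a.1.1 + c.1.1) (a.1.2 + c.1.2)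
      rw [hba, hdc]
      exact hinter c.1.1 a.1.1 c.1.2 a.1.2 hc ha
    rw [dif_pos hba, dif_pos hdc, dif_pos h]
    exact Subtype.ext (Prod.ext (S.interchange _ _ _ _ hstba hstdc) rfl)


/-- If a group-groupoid `G` acts on a group `M` via a group
homomorphism `w : M → G₀`, then the action groupoid `G ⋉ M` — objects `M`,
morphisms `{(a,x) : α(a) = w(x)}`, source `(a,x) ↦ x`, target `(a,x) ↦ a·x`,
composition `(b, a·x) ∘ (a,x) = (b ∘ a, x)`, identities `x ↦ (1_{w(x)}, x)` —
is a group-groupoid under componentwise addition `(a,x)+(b,y) = (a+b, x+y)`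
(the subgroup structure of `G × M`), and the projection `(a,x) ↦ a` is a
covering morphism of group-groupoids over `w`. -/
theorem stmt9 {O MG M : Type} [AddGroup O] [AddGroup MG] [AddGroup M]
    (S : GroupGpd O MG) (w : M →+ O) (act : MG → M → M)
    (hw : ∀ (a : MG) (x : M), S.src a = w x → w (act a x) = S.tgt a)
    (hcomp : ∀ (a b : MG) (x : M), S.src a = w x → S.src b = w (act a x) →
      act b (act a x) = act (S.comp b a) x)
    (hid : ∀ x : M, act (S.idm (w x)) x = x)
    (hinter : ∀ (a b : MG) (x y : M), S.src a = w x → S.src b = w y →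
      act b y + act a x = act (b + a) (y + x)) :
    ∃ (T : GroupGpd M ↥(actionSub S w)) (π : GGHom T S),
      (∀ q : ↥(actionSub S w), T.src q = q.1.2) ∧
      (∀ q : ↥(actionSub S w), T.tgt q = act q.1.1 q.1.2) ∧
      (∀ x : M, T.idm x = ⟨(S.idm (w x), x), (S.src_idm (w x) : _)⟩) ∧
      (∀ (a b : MG) (x : M) (ha : S.src a = w x) (hb : S.src b = w (act a x)),
        T.comp ⟨(b, act a x), hb⟩ ⟨(a, x), ha⟩ =
          ⟨(S.comp b a, x), (S.src_comp b a (hb.trans (hw a x ha))).trans ha⟩) ∧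
      π.f = (fun q : ↥(actionSub S w) => q.1.1) ∧
      π.f0 = ⇑w ∧
      π.IsCovering := by
  classical
  refine ⟨actT S w act hw hcomp hid hinter,
    { f := fun q => q.1.1
      f0 := ⇑w
      map_src := fun a => a.2
      map_tgt := fun a => (hw a.1.1 a.1.2 a.2).symm
      map_idm := fun x => rfl
      map_comp := fun b a h => by
        have h' : b.1.2 = act a.1.1 a.1.2 := h
        show ((actT S w act hw hcomp hid hinter).comp b a).1.1 = S.comp b.1.1 a.1.1
        dsimp only [actT]
        rw [dif_pos h']
      map_add := fun a b => rfl
      map_add0 := map_add w },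
    fun q => rfl, fun q => rfl, fun x => rfl,
    ?_, rfl, rfl, ?_⟩
  · intro a b x ha hb
    show (actT S w act hw hcomp hid hinter).comp _ _ = _
    dsimp only [actT]
    rw [dif_pos rfl]
  · intro x
    refine ⟨fun q hq => ?_, fun q hq q' hq' hff => ?_, fun b hb => ?_⟩
    · have hq2 : q.1.2 = x := hq
      show S.src q.1.1 = w x
      rw [(q.2 : S.src q.1.1 = w q.1.2), hq2]
    · have hq2 : q.1.2 = x := hq
      have hq2' : q'.1.2 = x := hq'
      apply Subtype.ext
      apply Prod.ext hff
      exact hq2.trans hq2'.symm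
    · exact ⟨⟨(b, x), hb⟩, rfl, rfl⟩
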